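/- If G is a connected k-regular graph on n ≥ 5 vertices with k ≥ 2, then every eigenvalue λ of R(G) := L(L(G)^c)^c other than the degree d = (1/8)(nk-8)(nk-4k+2) + 1 satisfies |λ| ≤ nk/2 - 2k + 1. -/

import Mathlib

open SimpleGraph Polynomial

noncomputable instance {V : Type*} [Finite V] {G : SimpleGraph V} {v : V} :
    Fintype (G.neighborSet v) := Fintype.ofFinite _

/-- The operation `R(G) = L(L(G)ᶜ)ᶜ`. -/
def RGraph {V : Type*} (G : SimpleGraph V) :
    SimpleGraph ((G.lineGraph)ᶜ.edgeSet) :=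
  ((G.lineGraph)ᶜ.lineGraph)ᶜ

/-- Adjacency matrix over `ℝ` of a graph on a finite vertex type. -/
noncomputable def adjM {V : Type*} [Fintype V] (G : SimpleGraph V) : Matrix V V ℝ :=
  letI := Classical.decRel G.Adj
  G.adjMatrix ℝ

/-- Characteristic polynomial of the adjacency matrix. -/
noncomputable def cpoly {V : Type*} [Finite V] (G : SimpleGraph V) : Polynomial ℝ :=
  letI := Fintype.ofFinite V
  letI := Classical.decEq V
  (adjM G).charpoly

/-- `μ` is an eigenvalue of the adjacency matrix of `G`. -/
def IsEigval {V : Type*} [Finite V] (G : SimpleGraph V) (μ : ℝ) : Prop :=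
  letI := Fintype.ofFinite V
  ∃ v : V → ℝ, v ≠ 0 ∧ (adjM G).mulVec v = μ • v

/-- `μ` is the second largest (distinct) eigenvalue of `G`. -/
def IsSecondLargestEigval {V : Type*} [Finite V] (G : SimpleGraph V) (μ : ℝ) : Prop :=
  IsEigval G μ ∧ ∃ ν : ℝ, IsEigval G ν ∧ μ < ν ∧
    ∀ ρ : ℝ, IsEigval G ρ → ρ = ν ∨ ρ ≤ μ

/-- `μ` is the smallest eigenvalue of `G`. -/
def IsSmallestEigval {V : Type*} [Finite V] (G : SimpleGraph V) (μ : ℝ) : Prop :=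
  IsEigval G μ ∧ ∀ ρ : ℝ, IsEigval G ρ → μ ≤ ρ

/-- `H` is a Ramanujan graph of degree `d`. -/
def IsRamanujan {V : Type*} [Finite V] (H : SimpleGraph V) (d : ℕ) : Prop :=
  H.Connected ∧ H.IsRegularOfDegree d ∧
    ∀ μ : ℝ, IsEigval H μ → |μ| ≠ (d : ℝ) → |μ| ≤ 2 * Real.sqrt (d - 1)

/-! ### Auxiliary machinery: incidence matrices, complements, regularity -/

open scoped Classical

section Aux

open Finset

variable {T : Type*} [Fintype T]

/-- The (edge × vertex) incidence matrix of a graph, over `ℝ`. -/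
noncomputable def incR (Γ : SimpleGraph T) : Γ.edgeSet → T → ℝ :=
  fun e u => if u ∈ (e : Sym2 T) then 1 else 0

lemma pair_eq_sym2 {a b c d : T} (hab : a ≠ b)
    (h : ({a, b} : Finset T) = {c, d}) : s(a, b) = s(c, d) := by
  have hc : c ∈ ({a, b} : Finset T) := by rw [h]; simp
  have hd : d ∈ ({a, b} : Finset T) := by rw [h]; simp
  have hb : b ∈ ({c, d} : Finset T) := by rw [← h]; simp
  have ha : a ∈ ({c, d} : Finset T) := by rw [← h]; simp
  simp only [Finset.mem_insert, Finset.mem_singleton] at hc hd hb ha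
  rw [Sym2.eq_iff]
  rcases hc with rfl | rfl <;> rcases hd with rfl | rfl <;> tauto

lemma sym2_count (e f : Sym2 T) (he : ¬e.IsDiag) (hf : ¬f.IsDiag) :
    ∑ u : T, (if u ∈ e then (1 : ℝ) else 0) * (if u ∈ f then 1 else 0) =
      (if e = f then 2 else 0) + (if e ≠ f ∧ ∃ v, v ∈ e ∧ v ∈ f then 1 else 0) := by
  induction e using Sym2.ind with | _ a b =>
  induction f using Sym2.ind with | _ c d =>
  rw [Sym2.mk_isDiag_iff] at he hf
  have h1 : ∀ u : T, (if u ∈ s(a, b) then (1 : ℝ) else 0) * (if u ∈ s(c, d) then 1 else 0)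
      = if u ∈ ({a, b} ∩ {c, d} : Finset T) then 1 else 0 := by
    intro u
    by_cases h1 : u ∈ s(a, b) <;> by_cases h2 : u ∈ s(c, d) <;>
      simp_all [Sym2.mem_iff, Finset.mem_inter]
  rw [Finset.sum_congr rfl fun u _ => h1 u, Finset.sum_boole, Finset.filter_univ_mem]
  by_cases hef : s(a, b) = s(c, d)
  · rw [if_pos hef]
    have hfin : ({a, b} : Finset T) = {c, d} := by
      obtain ⟨rfl, rfl⟩ | ⟨rfl, rfl⟩ := Sym2.eq_iff.mp hef <;>
        first
          | rfl
          | exact Finset.pair_comm _ _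
          | exact (Finset.pair_comm _ _).symm
    rw [hfin, Finset.inter_self, Finset.card_pair hf]
    simp [hef]
  · rw [if_neg hef]
    by_cases hsh : ∃ v, v ∈ s(a, b) ∧ v ∈ s(c, d)
    · rw [if_pos ⟨hef, hsh⟩]
      obtain ⟨v, hv1, hv2⟩ := hsh
      have hvab : v ∈ ({a, b} : Finset T) := by
        rw [Sym2.mem_iff] at hv1; simpa using hv1
      have hvcd : v ∈ ({c, d} : Finset T) := by
        rw [Sym2.mem_iff] at hv2; simpa using hv2
      have hset : ({a, b} ∩ {c, d} : Finset T) = {v} := by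
        apply Finset.eq_singleton_iff_unique_mem.mpr
        refine ⟨Finset.mem_inter.mpr ⟨hvab, hvcd⟩, ?_⟩
        intro u hu
        by_contra huv
        have hu1 : u ∈ ({a, b} : Finset T) := (Finset.mem_inter.mp hu).1
        have hu2 : u ∈ ({c, d} : Finset T) := (Finset.mem_inter.mp hu).2
        have s1 : ({u, v} : Finset T) ⊆ {a, b} := by
          intro x hx
          rcases Finset.mem_insert.mp hx with rfl | hx
          · exact hu1
          · rw [Finset.mem_singleton] at hx; subst hx; exact hvab
        have s2 : ({u, v} : Finset T) ⊆ {c, d} := by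
          intro x hx
          rcases Finset.mem_insert.mp hx with rfl | hx
          · exact hu2
          · rw [Finset.mem_singleton] at hx; subst hx; exact hvcd
        have c1 : ({u, v} : Finset T) = {a, b} :=
          Finset.eq_of_subset_of_card_le s1
            (by rw [Finset.card_pair he, Finset.card_pair huv])
        have c2 : ({u, v} : Finset T) = {c, d} :=
          Finset.eq_of_subset_of_card_le s2
            (by rw [Finset.card_pair hf, Finset.card_pair huv])
        exact hef (pair_eq_sym2 he (c1.symm.trans c2))
      rw [hset]; simp
    · rw [if_neg fun hc => hsh hc.2]
      have hset : ({a, b} ∩ {c, d} : Finset T) = ∅ := by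
        rw [Finset.eq_empty_iff_forall_notMem]
        intro u hu
        rw [Finset.mem_inter] at hu
        refine hsh ⟨u, ?_, ?_⟩
        · rw [Sym2.mem_iff]; simpa using hu.1
        · rw [Sym2.mem_iff]; simpa using hu.2
      rw [hset]; simp

variable (Γ : SimpleGraph T)

lemma incR_rowsum [Fintype Γ.edgeSet] (e : Γ.edgeSet) : ∑ u : T, incR Γ e u = 2 := by
  obtain ⟨e, he⟩ := e
  revert he
  induction e using Sym2.ind with | _ a b =>
  intro he
  have hab : a ≠ b := Γ.ne_of_adj (Γ.mem_edgeSet.mp he)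
  simp only [incR, Sym2.mem_iff]
  rw [Finset.sum_boole]
  have h2 : Finset.univ.filter (fun u => u = a ∨ u = b) = {a, b} := by ext u; simp
  rw [h2, Finset.card_pair hab]; norm_num

lemma incR_colsum [Fintype Γ.edgeSet] (u : T) :
    ∑ e : Γ.edgeSet, incR Γ e u = (Γ.degree u : ℝ) := by
  have h0 : ∑ e : Γ.edgeSet, incR Γ e u
      = ∑ e ∈ Γ.edgeFinset, (if u ∈ e then (1 : ℝ) else 0) := by
    rw [SimpleGraph.edgeFinset, ← Finset.sum_set_coe]
    rfl
  rw [h0, Finset.sum_boole]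
  norm_cast
  rw [← SimpleGraph.card_incidenceFinset_eq_degree, SimpleGraph.incidenceFinset_eq_filter]

lemma incR_mul [Fintype Γ.edgeSet] (e f : Γ.edgeSet) :
    ∑ u : T, incR Γ e u * incR Γ f u =
      (if e = f then 2 else 0) + adjM Γ.lineGraph e f := by
  have he := Γ.not_isDiag_of_mem_edgeSet e.2
  have hf := Γ.not_isDiag_of_mem_edgeSet f.2
  have hcount := sym2_count (e : Sym2 T) (f : Sym2 T) he hf
  simp only [incR]
  rw [hcount]
  by_cases hef : e = f
  · subst hef
    simp [adjM, SimpleGraph.adjMatrix_apply]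
  · have hef' : (e : Sym2 T) ≠ (f : Sym2 T) := fun h => hef (Subtype.ext h)
    rw [if_neg hef', if_neg hef]
    simp only [adjM, SimpleGraph.adjMatrix_apply]
    by_cases hadj : Γ.lineGraph.Adj e f
    · rw [if_pos ⟨hef', (SimpleGraph.lineGraph_adj_iff_exists.mp hadj).2⟩, if_pos hadj]
    · rw [if_neg fun hc => hadj (SimpleGraph.lineGraph_adj_iff_exists.mpr ⟨hef, hc.2⟩),
        if_neg hadj]

lemma incR_mul2 [Fintype Γ.edgeSet] (u v : T) :
    ∑ e : Γ.edgeSet, incR Γ e u * incR Γ e v =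
      (if u = v then (Γ.degree u : ℝ) else 0) + adjM Γ u v := by
  by_cases huv : u = v
  · subst huv
    have hsq : ∀ e : Γ.edgeSet, incR Γ e u * incR Γ e u = incR Γ e u := by
      intro e; simp only [incR]; split <;> norm_num
    rw [Finset.sum_congr rfl fun e _ => hsq e, incR_colsum]
    simp [adjM, SimpleGraph.adjMatrix_apply]
  · have h0 : ∑ e : Γ.edgeSet, incR Γ e u * incR Γ e v
        = ∑ e ∈ Γ.edgeFinset, (if u ∈ e ∧ v ∈ e then (1 : ℝ) else 0) := by
      rw [SimpleGraph.edgeFinset, ← Finset.sum_set_coe]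
      apply Finset.sum_congr rfl
      intro e _
      simp only [incR]
      split_ifs <;> simp_all
    rw [h0, Finset.sum_boole]
    have h1 : Γ.edgeFinset.filter (fun e => u ∈ e ∧ v ∈ e)
        = if Γ.Adj u v then {s(u, v)} else (∅ : Finset (Sym2 T)) := by
      split_ifs with hadj
      · ext w
        simp only [Finset.mem_filter, SimpleGraph.mem_edgeFinset, Finset.mem_singleton,
          Sym2.mem_and_mem_iff huv]
        constructor
        · rintro ⟨-, h⟩; exact h
        · rintro rfl; exact ⟨Γ.mem_edgeSet.mpr hadj, rfl⟩
      · ext w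
        simp only [Finset.mem_filter, SimpleGraph.mem_edgeFinset, Sym2.mem_and_mem_iff huv,
          Finset.notMem_empty, iff_false, not_and]
        rintro hw rfl
        exact hadj (Γ.mem_edgeSet.mp hw)
    rw [h1]
    split_ifs with hadj <;> simp [adjM, SimpleGraph.adjMatrix_apply, hadj, huv]

lemma sum_adjM (Γ : SimpleGraph T) (u : T) :
    ∑ v : T, adjM Γ u v = (Γ.degree u : ℝ) := by
  simp only [adjM, SimpleGraph.adjMatrix_apply]
  rw [Finset.sum_boole]
  norm_cast
  have hfil : Finset.univ.filter (fun x => Γ.Adj u x) = Γ.neighborFinset u := by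
    ext x; simp [SimpleGraph.mem_neighborFinset]
  rw [hfil]
  rfl

lemma adjM_compl (Γ : SimpleGraph T) (u v : T) :
    adjM Γᶜ u v = (if u = v then (0 : ℝ) else 1) - adjM Γ u v := by
  by_cases huv : u = v
  · subst huv; simp [adjM, SimpleGraph.adjMatrix_apply]
  · by_cases hadj : Γ.Adj u v
    · have hc : ¬ Γᶜ.Adj u v := by simp [SimpleGraph.compl_adj, hadj]
      simp [adjM, SimpleGraph.adjMatrix_apply, hc, hadj, huv]
    · have hc : Γᶜ.Adj u v := by simp [SimpleGraph.compl_adj, huv, hadj]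
      simp [adjM, SimpleGraph.adjMatrix_apply, hc, hadj, huv]

lemma sum_ite_eq_zero_one (u : T) :
    ∑ v : T, (if u = v then (0 : ℝ) else 1) = (Fintype.card T : ℝ) - 1 := by
  have h : ∀ v : T, (if u = v then (0 : ℝ) else 1) = 1 - (if u = v then 1 else 0) := by
    intro v; split <;> norm_num
  rw [Finset.sum_congr rfl fun v _ => h v]
  simp [Finset.sum_sub_distrib, Finset.sum_ite_eq, Finset.card_univ]

lemma compl_regular (Γ : SimpleGraph T) {r : ℕ} (hreg : Γ.IsRegularOfDegree r)
    (hr : r + 1 ≤ Fintype.card T) :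
    Γᶜ.IsRegularOfDegree (Fintype.card T - 1 - r) := by
  intro u
  have hreal : (Γᶜ.degree u : ℝ) = (Fintype.card T : ℝ) - 1 - r := by
    rw [← sum_adjM, Finset.sum_congr rfl fun v _ => adjM_compl Γ u v,
      Finset.sum_sub_distrib, sum_adjM, hreg u, sum_ite_eq_zero_one]
  have hcast : ((Fintype.card T - 1 - r : ℕ) : ℝ) = (Fintype.card T : ℝ) - 1 - r := by
    have h1 : 1 ≤ Fintype.card T := by omega
    have h2 : r ≤ Fintype.card T - 1 := by omega
    push_cast [Nat.cast_sub h2, Nat.cast_sub h1]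
    ring
  exact Nat.cast_injective (hreal.trans hcast.symm)

lemma handshake_reg (Γ : SimpleGraph T) [Fintype Γ.edgeSet] {r : ℕ}
    (hreg : Γ.IsRegularOfDegree r) :
    Fintype.card T * r = 2 * Fintype.card Γ.edgeSet := by
  have h1 : ∑ e : Γ.edgeSet, ∑ u : T, incR Γ e u = 2 * (Fintype.card Γ.edgeSet : ℝ) := by
    rw [Finset.sum_congr rfl fun e _ => incR_rowsum Γ e]
    simp [Finset.card_univ, mul_comm]
  have h2 : ∑ e : Γ.edgeSet, ∑ u : T, incR Γ e u = (Fintype.card T : ℝ) * r := by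
    rw [Finset.sum_comm, Finset.sum_congr rfl fun u _ => incR_colsum Γ u]
    rw [Finset.sum_congr rfl fun u _ => by rw [hreg u]]
    simp [Finset.card_univ, mul_comm]
  have := h2.symm.trans h1
  exact_mod_cast this

lemma lineGraph_regular (Γ : SimpleGraph T) [Fintype Γ.edgeSet] {r : ℕ} (hr : 1 ≤ r)
    (hreg : Γ.IsRegularOfDegree r) : Γ.lineGraph.IsRegularOfDegree (2 * r - 2) := by
  intro e
  have hreal : (Γ.lineGraph.degree e : ℝ) = 2 * r - 2 := by
    rw [← sum_adjM]
    have h1 : ∀ f : Γ.edgeSet, adjM Γ.lineGraph e f =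
        (∑ u : T, incR Γ e u * incR Γ f u) - (if e = f then 2 else 0) := by
      intro f; rw [incR_mul]; ring
    rw [Finset.sum_congr rfl fun f _ => h1 f, Finset.sum_sub_distrib, Finset.sum_comm]
    have h2 : ∀ u : T, ∑ f : Γ.edgeSet, incR Γ e u * incR Γ f u
        = incR Γ e u * r := by
      intro u; rw [← Finset.mul_sum, incR_colsum, hreg u]
    rw [Finset.sum_congr rfl fun u _ => h2 u, ← Finset.sum_mul, incR_rowsum]
    rw [Finset.sum_ite_eq]
    simp
  have hcast : ((2 * r - 2 : ℕ) : ℝ) = 2 * r - 2 := by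
    push_cast [Nat.cast_sub (show 2 ≤ 2 * r by omega)]
    ring
  exact Nat.cast_injective (hreal.trans hcast.symm)

lemma mulVec_apply' {W : Type*} [Fintype W] (M : Matrix W W ℝ) (x : W → ℝ) (u : W) :
    M.mulVec x u = ∑ v, M u v * x v := rfl

lemma eig_apply {W : Type*} [Fintype W] {M : Matrix W W ℝ} {x : W → ℝ} {c : ℝ}
    (h : M.mulVec x = c • x) (u : W) : ∑ v, M u v * x v = c * x u := by
  have := congrFun h u
  simpa [mulVec_apply'] using this

lemma sum_sq_pos {W : Type*} [Fintype W] {x : W → ℝ} (hx : x ≠ 0) :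
    0 < ∑ u, (x u) ^ 2 := by
  obtain ⟨e0, he0⟩ := Function.ne_iff.mp hx
  have h0 : x e0 ≠ 0 := by simpa using he0
  exact Finset.sum_pos' (fun i _ => sq_nonneg _)
    ⟨e0, Finset.mem_univ _, lt_of_le_of_ne (sq_nonneg _) (Ne.symm (pow_ne_zero 2 h0))⟩

lemma lineEig_lower (Γ : SimpleGraph T) [Fintype Γ.edgeSet] {x : Γ.edgeSet → ℝ} (hx : x ≠ 0)
    {c : ℝ} (h : (adjM Γ.lineGraph).mulVec x = c • x) : -2 ≤ c := by
  have expand : ∑ u : T, (∑ e : Γ.edgeSet, x e * incR Γ e u) ^ 2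
      = ∑ e : Γ.edgeSet, ∑ f : Γ.edgeSet, (x e * x f) * ∑ u : T, incR Γ e u * incR Γ f u := by
    have hpt : ∀ u : T, (∑ e : Γ.edgeSet, x e * incR Γ e u) ^ 2
        = ∑ e : Γ.edgeSet, ∑ f : Γ.edgeSet, (x e * x f) * (incR Γ e u * incR Γ f u) := by
      intro u
      rw [sq, Finset.sum_mul_sum]
      exact Finset.sum_congr rfl fun e _ => Finset.sum_congr rfl fun f _ => by ring
    rw [Finset.sum_congr rfl fun u _ => hpt u, Finset.sum_comm]
    refine Finset.sum_congr rfl fun e _ => ?_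
    rw [Finset.sum_comm]
    exact Finset.sum_congr rfl fun f _ => by rw [Finset.mul_sum]
  have eval : ∑ e : Γ.edgeSet, ∑ f : Γ.edgeSet, (x e * x f) * ∑ u : T, incR Γ e u * incR Γ f u
      = (2 + c) * ∑ e : Γ.edgeSet, (x e) ^ 2 := by
    have hpt : ∀ e f : Γ.edgeSet, (x e * x f) * (∑ u : T, incR Γ e u * incR Γ f u)
        = (if e = f then 2 * (x e * x f) else 0) + x e * (adjM Γ.lineGraph e f * x f) := by
      intro e f
      rw [incR_mul]
      split <;> ring
    rw [Finset.sum_congr rfl fun e _ =>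
      Finset.sum_congr rfl fun f _ => hpt e f]
    simp only [Finset.sum_add_distrib]
    have hA : ∀ e : Γ.edgeSet, ∑ f : Γ.edgeSet, x e * (adjM Γ.lineGraph e f * x f)
        = c * (x e) ^ 2 := by
      intro e
      rw [← Finset.mul_sum, eig_apply h e]
      ring
    have hD : ∀ e : Γ.edgeSet, ∑ f : Γ.edgeSet, (if e = f then 2 * (x e * x f) else 0)
        = 2 * (x e) ^ 2 := by
      intro e
      rw [Finset.sum_ite_eq]
      simp [sq]
    rw [Finset.sum_congr rfl fun e _ => hA e, Finset.sum_congr rfl fun e _ => hD e,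
      ← Finset.mul_sum, ← Finset.mul_sum]
    ring
  have nonneg : 0 ≤ ∑ u : T, (∑ e : Γ.edgeSet, x e * incR Γ e u) ^ 2 :=
    Finset.sum_nonneg fun u _ => sq_nonneg _
  have Spos : 0 < ∑ e : Γ.edgeSet, (x e) ^ 2 := sum_sq_pos hx
  nlinarith [expand, eval, nonneg, Spos]

lemma compl_step (Γ : SimpleGraph T) {x : T → ℝ} (hsum : ∑ u, x u = 0)
    {μ : ℝ} (h : (adjM Γᶜ).mulVec x = μ • x) :
    (adjM Γ).mulVec x = (-1 - μ) • x := by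
  funext u
  have hmv : ∑ v, adjM Γᶜ u v * x v = μ * x u := eig_apply h u
  have hpt : ∀ v, adjM Γᶜ u v * x v
      = (x v - (if u = v then x v else 0)) - adjM Γ u v * x v := by
    intro v
    rw [adjM_compl]
    split <;> ring
  have hsum2 : ∑ v, adjM Γᶜ u v * x v
      = ((∑ v, x v) - x u) - ∑ v, adjM Γ u v * x v := by
    rw [Finset.sum_congr rfl fun v _ => hpt v, Finset.sum_sub_distrib,
      Finset.sum_sub_distrib, Finset.sum_ite_eq]
    simp
  rw [hmv, hsum] at hsum2
  have hfin : ∑ v, adjM Γ u v * x v = (-1 - μ) * x u := by linarith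
  show (adjM Γ).mulVec x u = ((-1 - μ) • x) u
  rw [mulVec_apply', hfin]
  simp

lemma orth_step (Γ : SimpleGraph T) {d : ℕ} (hreg : Γ.IsRegularOfDegree d)
    {x : T → ℝ} {μ : ℝ} (h : (adjM Γ).mulVec x = μ • x) (hne : μ ≠ (d : ℝ)) :
    ∑ u, x u = 0 := by
  have h1 : ∑ u, ∑ v, adjM Γ u v * x v = μ * ∑ u, x u := by
    rw [Finset.mul_sum]
    exact Finset.sum_congr rfl fun u _ => eig_apply h u
  have h2 : ∑ u, ∑ v, adjM Γ u v * x v = (d : ℝ) * ∑ u, x u := by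
    rw [Finset.sum_comm]
    have hcol : ∀ v, ∑ u, adjM Γ u v * x v = (d : ℝ) * x v := by
      intro v
      rw [← Finset.sum_mul]
      have hsymm : ∀ u, adjM Γ u v = adjM Γ v u := by
        intro u
        simp only [adjM, SimpleGraph.adjMatrix_apply]
        exact if_congr (Γ.adj_comm u v) rfl rfl
      rw [Finset.sum_congr rfl fun u _ => hsymm u, sum_adjM, hreg v]
    rw [Finset.sum_congr rfl fun v _ => hcol v, ← Finset.mul_sum]
  have h3 : (μ - (d : ℝ)) * ∑ u, x u = 0 := by
    rw [sub_mul]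
    rw [h1] at h2
    linarith
  rcases mul_eq_zero.mp h3 with h4 | h4
  · exact absurd (by linarith : μ = (d : ℝ)) hne
  · exact h4

lemma pushdown (Γ : SimpleGraph T) [Fintype Γ.edgeSet] {r : ℕ}
    (hreg : Γ.IsRegularOfDegree r)
    {x : Γ.edgeSet → ℝ} (hx : x ≠ 0) (hsum : ∑ e, x e = 0)
    {c : ℝ} (h : (adjM Γ.lineGraph).mulVec x = c • x) :
    c = -2 ∨ ∃ w : T → ℝ, w ≠ 0 ∧ (∑ u, w u = 0) ∧
      (adjM Γ).mulVec w = (c + 2 - r) • w := by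
  set w : T → ℝ := fun u => ∑ e : Γ.edgeSet, x e * incR Γ e u with hw
  have hBw : ∀ e : Γ.edgeSet, ∑ u : T, incR Γ e u * w u = (c + 2) * x e := by
    intro e
    have hpt : ∀ u : T, incR Γ e u * w u
        = ∑ f : Γ.edgeSet, x f * (incR Γ e u * incR Γ f u) := by
      intro u
      rw [hw]
      simp only
      rw [Finset.mul_sum]
      exact Finset.sum_congr rfl fun f _ => by ring
    rw [Finset.sum_congr rfl fun u _ => hpt u, Finset.sum_comm]
    have hptf : ∀ f : Γ.edgeSet, ∑ u : T, x f * (incR Γ e u * incR Γ f u)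
        = (if e = f then 2 * x f else 0) + adjM Γ.lineGraph e f * x f := by
      intro f
      rw [← Finset.mul_sum, incR_mul]
      split <;> ring
    rw [Finset.sum_congr rfl fun f _ => hptf f, Finset.sum_add_distrib,
      Finset.sum_ite_eq, eig_apply h e]
    simp
    ring
  by_cases hw0 : w = 0
  · left
    obtain ⟨e0, he0⟩ := Function.ne_iff.mp hx
    have h0 : x e0 ≠ 0 := by simpa using he0
    have := hBw e0
    rw [hw0] at this
    simp at this
    rcases this with h1 | h1
    · linarith
    · exact absurd h1 h0
  · right
    refine ⟨w, hw0, ?_, ?_⟩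
    · rw [hw]
      simp only
      rw [Finset.sum_comm]
      have hpt : ∀ e : Γ.edgeSet, ∑ u : T, x e * incR Γ e u = 2 * x e := by
        intro e; rw [← Finset.mul_sum, incR_rowsum]; ring
      rw [Finset.sum_congr rfl fun e _ => hpt e, ← Finset.mul_sum, hsum]
      ring
    · funext u
      have key : (c + 2) * w u = (r : ℝ) * w u + ∑ v, adjM Γ u v * w v := by
        have e1 : (c + 2) * w u = ∑ e : Γ.edgeSet, incR Γ e u * ((c + 2) * x e) := by
          rw [hw]
          simp only
          rw [Finset.mul_sum]
          exact Finset.sum_congr rfl fun e _ => by ring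
        rw [e1, Finset.sum_congr rfl fun e _ => by rw [← hBw e]]
        have e2 : ∀ e : Γ.edgeSet, incR Γ e u * (∑ v, incR Γ e v * w v)
            = ∑ v, (incR Γ e u * incR Γ e v) * w v := by
          intro e
          rw [Finset.mul_sum]
          exact Finset.sum_congr rfl fun v _ => by ring
        rw [Finset.sum_congr rfl fun e _ => e2 e, Finset.sum_comm]
        have e3 : ∀ v, ∑ e : Γ.edgeSet, (incR Γ e u * incR Γ e v) * w v
            = (if u = v then (r : ℝ) * w v else 0) + adjM Γ u v * w v := by
          intro v
          rw [← Finset.sum_mul, incR_mul2, hreg u]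
          split <;> ring
        rw [Finset.sum_congr rfl fun v _ => e3 v, Finset.sum_add_distrib,
          Finset.sum_ite_eq]
        simp
      have hfin : ∑ v, adjM Γ u v * w v = (c + 2 - r) * w u := by linarith
      show (adjM Γ).mulVec w u = ((c + 2 - (r : ℝ)) • w) u
      rw [mulVec_apply', hfin]
      simp


end Aux

theorem stmt16 {V : Type*} [Fintype V] (G : SimpleGraph V) (k : ℕ)
    (hn : 5 ≤ Fintype.card V) (hk : 2 ≤ k) (hconn : G.Connected)
    (hreg : G.IsRegularOfDegree k) :
    ∀ μ : ℝ, IsEigval (RGraph G) μ →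
      μ ≠ ((Fintype.card V : ℝ) * k - 8) * ((Fintype.card V : ℝ) * k - 4 * k + 2) / 8 + 1 →
      |μ| ≤ (Fintype.card V : ℝ) * k / 2 - 2 * k + 1 := by
  classical
  letI iT : Fintype ↑G.edgeSet := Fintype.ofFinite _
  letI iW : Fintype ↑((G.lineGraph)ᶜ.edgeSet) := Fintype.ofFinite _
  intro μ hμ hne
  obtain ⟨v, hv0, hv'⟩ := hμ
  have hv : (adjM (RGraph G)).mulVec v = μ • v := hv'
  clear hv'
  have hk1 : 1 ≤ k := by omega
  -- handshake for G
  have hhs : Fintype.card V * k = 2 * Fintype.card ↑G.edgeSet := handshake_reg G hreg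
  set n := Fintype.card V with hnn
  set m := Fintype.card ↑G.edgeSet with hmm
  have h5k : 5 * k ≤ n * k := Nat.mul_le_mul_right k hn
  have h2m : 5 * k ≤ 2 * m := hhs ▸ h5k
  have hm : 2 * k + 1 ≤ m := by omega
  -- line graph of G and its complement
  have hLreg : G.lineGraph.IsRegularOfDegree (2 * k - 2) := lineGraph_regular G hk1 hreg
  have hHreg : ((G.lineGraph)ᶜ).IsRegularOfDegree (m - 1 - (2 * k - 2)) :=
    compl_regular G.lineGraph hLreg (by omega)
  set rH := m - 1 - (2 * k - 2) with hrHdef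
  have hrH2 : 2 ≤ rH := by omega
  -- handshake for H
  have hhsH : m * rH = 2 * Fintype.card ↑((G.lineGraph)ᶜ).edgeSet := handshake_reg (G.lineGraph)ᶜ hHreg
  set N := Fintype.card ↑((G.lineGraph)ᶜ).edgeSet with hNN
  have hLHreg : ((G.lineGraph)ᶜ).lineGraph.IsRegularOfDegree (2 * rH - 2) :=
    lineGraph_regular (G.lineGraph)ᶜ (by omega) hHreg
  have h5rH : 5 * rH ≤ m * rH := Nat.mul_le_mul_right rH (by omega)
  have h2N : 5 * rH ≤ 2 * N := hhsH ▸ h5rH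
  have hN : 2 * rH ≤ N := by omega
  have hRreg : (RGraph G).IsRegularOfDegree (N - 1 - (2 * rH - 2)) :=
    compl_regular ((G.lineGraph)ᶜ).lineGraph hLHreg (by omega)
  set dd := N - 1 - (2 * rH - 2) with hdddef
  -- real-number identities
  have hmR : (m : ℝ) = (n : ℝ) * k / 2 := by
    have : ((n * k : ℕ) : ℝ) = ((2 * m : ℕ) : ℝ) := by exact_mod_cast hhs
    push_cast at this
    linarith
  have hrHR : (rH : ℝ) = (m : ℝ) - 2 * k + 1 := by
    have hnat : rH + 2 * k = m + 1 := by omega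
    have : ((rH + 2 * k : ℕ) : ℝ) = ((m + 1 : ℕ) : ℝ) := by exact_mod_cast hnat
    push_cast at this
    linarith
  have hNR : 2 * (N : ℝ) = (m : ℝ) * rH := by
    have : ((m * rH : ℕ) : ℝ) = ((2 * N : ℕ) : ℝ) := by exact_mod_cast hhsH
    push_cast at this
    linarith
  have hddR : (dd : ℝ) = (N : ℝ) - 2 * rH + 1 := by
    have hnat : dd + 2 * rH = N + 1 := by omega
    have : ((dd + 2 * rH : ℕ) : ℝ) = ((N + 1 : ℕ) : ℝ) := by exact_mod_cast hnat
    push_cast at this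
    linarith
  have h1 : (rH : ℝ) = (n : ℝ) * k / 2 - 2 * k + 1 := by rw [hrHR, hmR]
  have hdd_eq : (dd : ℝ) = ((n : ℝ) * k - 8) * ((n : ℝ) * k - 4 * k + 2) / 8 + 1 := by
    have h2 : (N : ℝ) = ((n : ℝ) * k / 2) * ((n : ℝ) * k / 2 - 2 * k + 1) / 2 := by
      have h3 : (N : ℝ) = (m : ℝ) * rH / 2 := by linarith
      rw [hmR, h1] at h3
      exact h3
    rw [hddR, h2, h1]
    ring
  -- extract the eigenvector
  have hμd : μ ≠ (dd : ℝ) := by rw [hdd_eq]; exact hne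
  have hvsum : ∑ e, v e = 0 := orth_step (RGraph G) hRreg hv hμd
  have hstep1 : (adjM ((G.lineGraph)ᶜ).lineGraph).mulVec v = (-1 - μ) • v :=
    compl_step ((G.lineGraph)ᶜ).lineGraph hvsum hv
  have hc2 : -2 ≤ -1 - μ := lineEig_lower (G.lineGraph)ᶜ hv0 hstep1
  have hμ1 : μ ≤ 1 := by linarith
  have hrHpos : (2 : ℝ) ≤ (rH : ℝ) := by exact_mod_cast hrH2
  have hlow : -(rH : ℝ) ≤ μ := by
    rcases pushdown (G.lineGraph)ᶜ hHreg hv0 hvsum hstep1 with hcm2 | ⟨w, hw0, hwsum, hw⟩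
    · -- then μ = 1
      have : μ = 1 := by linarith
      linarith
    · have hstep2 : (adjM G.lineGraph).mulVec w = (-1 - (-1 - μ + 2 - rH)) • w :=
        compl_step G.lineGraph hwsum hw
      have := lineEig_lower G hw0 hstep2
      linarith
  rw [abs_le]
  constructor
  · linarith
  · linarith
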